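/- (Theorem 1, vacuum decomposition.) Let P be the orthogonal projection of h onto N = {x ∈ h : Ax = 0 for all A ∈ 𝒜} and Q = I − P. Define the Brownian part 𝔟 = {(0, u, v, 0) : u ∈ Ph, v = v∘P} and the Lévy part 𝔠 = {(0, u, v, A) : u ∈ Qh, v = v∘Q, A ∈ 𝒜}. Then: (i) every a = (α, x, y, A) ∈ 𝔞(h,𝒜) decomposes uniquely as a = αθ + b + c with b = (0, Px, y∘P, 0) ∈ 𝔟 and c = (0, Qx, y∘Q, A) ∈ 𝔠; (ii) 𝔟 and 𝔠 are ⋆-invariant subalgebras with bc = 0 and cb = 0 for all b ∈ 𝔟, c ∈ 𝔠; (iii) the product of any two elements of 𝔟 lies in ℂθ. -/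

import Mathlib

/-!
Theorem 1: decomposition of the vacuum Itô algebra into Brownian and Lévy parts.
-/

open scoped ComplexOrder

noncomputable section

/-- The underlying space of the vacuum Itô algebra `𝔞(h,𝒜)`: quadruples
`(α, x, y, A)` with `α ∈ ℂ`, a ket `x ∈ h`, a bra `y ∈ h*` (a continuous linear
functional) and `A` in the *-subalgebra `𝒜 ⊆ B(h)`. -/
abbrev VacuumIto (H : Type*) [NormedAddCommGroup H] [InnerProductSpace ℂ H]
    [CompleteSpace H] (𝒜 : NonUnitalStarSubalgebra ℂ (H →L[ℂ] H)) :=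
  ℂ × H × (H →L[ℂ] ℂ) × 𝒜

variable {H : Type*} [NormedAddCommGroup H] [InnerProductSpace ℂ H] [CompleteSpace H]
  {𝒜 : NonUnitalStarSubalgebra ℂ (H →L[ℂ] H)}

/-- The product `(α₁,x₁,y₁,A₁)·(α₂,x₂,y₂,A₂) = (y₁(x₂), A₁x₂, y₁∘A₂, A₁A₂)`. -/
def vprod (a b : VacuumIto H 𝒜) : VacuumIto H 𝒜 :=
  ⟨a.2.2.1 b.2.1, (a.2.2.2 : H →L[ℂ] H) b.2.1,
    a.2.2.1.comp (b.2.2.2 : H →L[ℂ] H), a.2.2.2 * b.2.2.2⟩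

/-- The involution `(α,x,y,A)⋆ = (conj α, y♯, x♭, A†)`, where `y♯` is the Riesz
representative of the bra `y` and `x♭ = ⟨x|·⟩`. -/
def vstar (a : VacuumIto H 𝒜) : VacuumIto H 𝒜 :=
  ⟨starRingEnd ℂ a.1, (InnerProductSpace.toDual ℂ H).symm a.2.2.1,
    (InnerProductSpace.toDual ℂ H a.2.1 : H →L[ℂ] ℂ), star a.2.2.2⟩

/-- The death `θ = (1,0,0,0)`. -/
def vtheta : VacuumIto H 𝒜 := ⟨1, 0, 0, 0⟩

/-- The functional `l(α,x,y,A) = α`. -/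
def vl (a : VacuumIto H 𝒜) : ℂ := a.1

variable (H 𝒜)

set_option maxHeartbeats 2000000 in
set_option synthInstance.maxHeartbeats 200000 in
/-- **Theorem 1, vacuum decomposition.** With `P` the orthogonal
projection onto `N = {x : Ax = 0 ∀ A ∈ 𝒜}` and `Q = I - P`, the Brownian part
`𝔟 = {(0,u,v,0) : u ∈ Ph, v = v∘P}` and the Lévy part
`𝔠 = {(0,u,v,A) : u ∈ Qh, v = v∘Q, A ∈ 𝒜}` give a unique orthogonal
decomposition `a = αθ + b + c`; `𝔟` and `𝔠` are ⋆-invariant subalgebras (modulo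
the death `θ`) with `bc = 0 = cb`, and products of two elements of `𝔟` lie in `ℂθ`. -/
theorem vacuumIto_decomposition
    (H : Type*) [NormedAddCommGroup H] [InnerProductSpace ℂ H] [CompleteSpace H]
    (𝒜 : NonUnitalStarSubalgebra ℂ (H →L[ℂ] H))
    (N : Submodule ℂ H) (hN : ∀ x : H, x ∈ N ↔ ∀ A ∈ 𝒜, A x = 0)
    (P : H →L[ℂ] H) (hPmem : ∀ x : H, P x ∈ N) (hPorth : ∀ x : H, x - P x ∈ Nᗮ)
    (Q : H →L[ℂ] H) (hQ : Q = ContinuousLinearMap.id ℂ H - P)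
    (𝔟 : Set (VacuumIto H 𝒜))
    (h𝔟 : 𝔟 = {a : VacuumIto H 𝒜 |
      a.1 = 0 ∧ P a.2.1 = a.2.1 ∧ a.2.2.1.comp P = a.2.2.1 ∧ a.2.2.2 = 0})
    (𝔠 : Set (VacuumIto H 𝒜))
    (h𝔠 : 𝔠 = {a : VacuumIto H 𝒜 |
      a.1 = 0 ∧ Q a.2.1 = a.2.1 ∧ a.2.2.1.comp Q = a.2.2.1}) :
    -- (i) existence and uniqueness of the decomposition a = αθ + b + c
    (∀ a : VacuumIto H 𝒜,
      ((0 : ℂ), P a.2.1, a.2.2.1.comp P, (0 : 𝒜)) ∈ 𝔟 ∧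
      ((0 : ℂ), Q a.2.1, a.2.2.1.comp Q, a.2.2.2) ∈ 𝔠 ∧
      a = a.1 • vtheta + ((0 : ℂ), P a.2.1, a.2.2.1.comp P, (0 : 𝒜))
            + ((0 : ℂ), Q a.2.1, a.2.2.1.comp Q, a.2.2.2) ∧
      (∀ (α' : ℂ) (b' c' : VacuumIto H 𝒜), b' ∈ 𝔟 → c' ∈ 𝔠 →
        a = α' • vtheta + b' + c' →
        α' = a.1 ∧ b' = ((0 : ℂ), P a.2.1, a.2.2.1.comp P, (0 : 𝒜))
          ∧ c' = ((0 : ℂ), Q a.2.1, a.2.2.1.comp Q, a.2.2.2))) ∧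
    -- (ii) 𝔟 and 𝔠 are ⋆-invariant subspaces, multiplicatively closed modulo ℂθ,
    -- and mutually annihilating
    (∀ b ∈ 𝔟, vstar b ∈ 𝔟) ∧ (∀ c ∈ 𝔠, vstar c ∈ 𝔠) ∧
    (∀ b b' : VacuumIto H 𝒜, b ∈ 𝔟 → b' ∈ 𝔟 → b + b' ∈ 𝔟) ∧
    (∀ (γ : ℂ) (b : VacuumIto H 𝒜), b ∈ 𝔟 → γ • b ∈ 𝔟) ∧
    (∀ c c' : VacuumIto H 𝒜, c ∈ 𝔠 → c' ∈ 𝔠 → c + c' ∈ 𝔠) ∧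
    (∀ (γ : ℂ) (c : VacuumIto H 𝒜), c ∈ 𝔠 → γ • c ∈ 𝔠) ∧
    (∀ c c' : VacuumIto H 𝒜, c ∈ 𝔠 → c' ∈ 𝔠 →
      vprod c c' - (vl (vprod c c')) • vtheta ∈ 𝔠) ∧
    (∀ b ∈ 𝔟, ∀ c ∈ 𝔠, vprod b c = 0 ∧ vprod c b = 0) ∧
    -- (iii) products of two elements of 𝔟 lie in ℂθ
    (∀ b b' : VacuumIto H 𝒜, b ∈ 𝔟 → b' ∈ 𝔟 →
      ∃ γ : ℂ, vprod b b' = γ • vtheta) := by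

  subst hQ h𝔟 h𝔠
  set Q : H →L[ℂ] H := ContinuousLinearMap.id ℂ H - P with hQdef
  -- basic facts about the projection
  have hzero : ∀ w : H, w ∈ N → w ∈ Nᗮ → w = 0 := by
    intro w h1 h2
    have := (Submodule.mem_orthogonal N w).1 h2 w h1
    exact inner_self_eq_zero.mp this
  have hNP : ∀ x ∈ N, P x = x := by
    intro x hx
    have h3 : x - P x ∈ N := N.sub_mem hx (hPmem x)
    have := hzero _ h3 (hPorth x)
    rw [sub_eq_zero] at this
    exact this.symm
  have hPperp : ∀ x ∈ Nᗮ, P x = 0 := by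
    intro x hx
    have h3 : P x ∈ Nᗮ := by
      have : P x = x - (x - P x) := (sub_sub_cancel x (P x)).symm
      rw [this]
      exact Nᗮ.sub_mem hx (hPorth x)
    exact hzero _ (hPmem x) h3
  have hPP : ∀ x, P (P x) = P x := fun x => hNP _ (hPmem x)
  have hPsa : ∀ x y : H, (inner ℂ (P x) y : ℂ) = inner ℂ x (P y) := by
    intro x y
    have h1 : (inner ℂ (P x) (y - P y) : ℂ) = 0 :=
      ((Submodule.mem_orthogonal N _).1 (hPorth y) _ (hPmem x))
    have h2 : (inner ℂ (x - P x) (P y) : ℂ) = 0 := by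
      have := (Submodule.mem_orthogonal N _).1 (hPorth x) _ (hPmem y)
      rw [← inner_conj_symm, this, map_zero]
    have e1 : (inner ℂ (P x) y : ℂ) = inner ℂ (P x) (P y) := by
      have := inner_sub_right (𝕜 := ℂ) (P x) y (P y)
      rw [h1] at this
      linear_combination -this
    have e2 : (inner ℂ x (P y) : ℂ) = inner ℂ (P x) (P y) := by
      have := inner_sub_left (𝕜 := ℂ) x (P x) (P y)
      rw [h2] at this
      linear_combination -this
    rw [e1, e2]
  have hQapp : ∀ z : H, Q z = z - P z := fun z => rfl
  have hQsa : ∀ x y : H, (inner ℂ (Q x) y : ℂ) = inner ℂ x (Q y) := by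
    intro x y
    rw [hQapp, hQapp, inner_sub_left, inner_sub_right, hPsa]
  have hPQ : ∀ z, P (Q z) = 0 := by
    intro z; rw [hQapp, map_sub, hPP, sub_self]
  have hQP : ∀ z, Q (P z) = 0 := by
    intro z; rw [hQapp, hPP, sub_self]
  have hQQ : ∀ z, Q (Q z) = Q z := by
    intro z; rw [hQapp (Q z), hPQ, sub_zero]
  have hAP : ∀ (A : 𝒜) (z : H), (A : H →L[ℂ] H) (P z) = 0 := by
    intro A z
    exact (hN _).1 (hPmem z) (A : H →L[ℂ] H) A.2
  have hPA : ∀ (A : 𝒜) (z : H), P ((A : H →L[ℂ] H) z) = 0 := by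
    intro A z
    apply hPperp
    rw [Submodule.mem_orthogonal]
    intro n hn
    have hstar : (star A : 𝒜) = ⟨star (A : H →L[ℂ] H), 𝒜.star_mem' A.2⟩ := rfl
    have hsn : (star (A : H →L[ℂ] H)) n = 0 := (hN _).1 hn _ (𝒜.star_mem' A.2)
    have : (inner ℂ ((A : H →L[ℂ] H) z) n : ℂ) = 0 := by
      rw [ContinuousLinearMap.star_eq_adjoint] at hsn
      rw [← ContinuousLinearMap.adjoint_inner_right, hsn, inner_zero_right]
    rw [← inner_conj_symm, this, map_zero]
  have hQA : ∀ (A : 𝒜) (z : H), Q ((A : H →L[ℂ] H) z) = (A : H →L[ℂ] H) z := by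
    intro A z; rw [hQapp, hPA, sub_zero]
  have hAQ : ∀ (A : 𝒜) (z : H), (A : H →L[ℂ] H) (Q z) = (A : H →L[ℂ] H) z := by
    intro A z; rw [hQapp, map_sub, hAP, sub_zero]
  refine ⟨?_, ?_, ?_, ?_, ?_, ?_, ?_, ?_, ?_, ?_⟩
  · -- (i)
    intro a
    obtain ⟨α, x, y, A⟩ := a
    refine ⟨⟨rfl, hPP x, ?_, rfl⟩, ⟨rfl, hQQ x, ?_⟩, ?_, ?_⟩
    · exact ContinuousLinearMap.ext fun z => by
        simp only [ContinuousLinearMap.comp_apply, hPP]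
    · exact ContinuousLinearMap.ext fun z => by
        simp only [ContinuousLinearMap.comp_apply, hQQ]
    · refine Prod.ext ?_ (Prod.ext ?_ (Prod.ext ?_ ?_)) <;>
        simp only [vtheta, Prod.smul_mk, Prod.fst_add, Prod.snd_add, smul_zero,
          smul_eq_mul, mul_one]
      · ring
      · rw [hQapp]; abel
      · exact ContinuousLinearMap.ext fun z => by
          simp only [ContinuousLinearMap.add_apply, ContinuousLinearMap.zero_apply,
            ContinuousLinearMap.smul_apply, smul_zero,
            ContinuousLinearMap.comp_apply, hQapp, map_sub]
          ring
      · simp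
    · intro α' b' c' hb hc heq
      obtain ⟨β, u, v, B⟩ := b'
      obtain ⟨γ, w, t, C⟩ := c'
      obtain ⟨hβ, hu, hv, hB⟩ := hb
      obtain ⟨hγ, hw, ht⟩ := hc
      simp only [Set.mem_setOf_eq] at hβ hu hv hB hγ hw ht
      rw [Prod.ext_iff, Prod.ext_iff, Prod.ext_iff] at heq
      obtain ⟨e1, e2, e3, e4⟩ := heq
      simp only [vtheta, Prod.smul_mk, Prod.fst_add, Prod.snd_add, smul_zero,
        smul_eq_mul, mul_one] at e1 e2 e3 e4
      have hPw : P w = 0 := by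
        have : w - P w = w := hw
        have h2 : P w = 0 := by
          have := congrArg (fun z => w - z) this.symm
          simpa using this.symm
        exact h2
      have hQu : Q u = 0 := by rw [← hu, hQP]
      have hα : α' = α := by rw [e1, hβ, hγ]; ring
      have hxu : u = P x := by
        rw [e2]
        simp only [map_add, map_smul, map_zero, smul_zero, hPw, add_zero, zero_add, hu]
      have hxw : w = Q x := by
        rw [e2]
        simp only [map_add, map_smul, map_zero, smul_zero, hQu, zero_add, add_zero, hw]
      have hyv : v = y.comp P := by
        refine ContinuousLinearMap.ext fun z => ?_
        have h := congrArg (fun f : H →L[ℂ] ℂ => f (P z)) e3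
        simp only [ContinuousLinearMap.add_apply, ContinuousLinearMap.smul_apply,
          ContinuousLinearMap.zero_apply, smul_zero, zero_add] at h
        have hvPz : v (P z) = v z := DFunLike.congr_fun hv z
        have htPz : t (P z) = 0 := by
          have h2 : t (Q (P z)) = t (P z) := DFunLike.congr_fun ht (P z)
          rw [hQP, map_zero] at h2
          exact h2.symm
        rw [hvPz, htPz, add_zero] at h
        simpa [ContinuousLinearMap.comp_apply] using h.symm
      have hyt : t = y.comp Q := by
        refine ContinuousLinearMap.ext fun z => ?_
        have h := congrArg (fun f : H →L[ℂ] ℂ => f (Q z)) e3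
        simp only [ContinuousLinearMap.add_apply, ContinuousLinearMap.smul_apply,
          ContinuousLinearMap.zero_apply, smul_zero, zero_add] at h
        have htQz : t (Q z) = t z := DFunLike.congr_fun ht z
        have hvQz : v (Q z) = 0 := by
          have h2 : v (P (Q z)) = v (Q z) := DFunLike.congr_fun hv (Q z)
          rw [hPQ, map_zero] at h2
          exact h2.symm
        rw [hvQz, htQz, zero_add] at h
        simpa [ContinuousLinearMap.comp_apply] using h.symm
      have hAC : C = A := by rw [e4, hB, zero_add, zero_add]
      exact ⟨hα, by rw [hβ, hxu, hyv, hB], by rw [hγ, hxw, hyt, hAC]⟩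
  · -- vstar b ∈ 𝔟
    rintro ⟨β, u, v, B⟩ ⟨hβ, hu, hv, hB⟩
    simp only [Set.mem_setOf_eq] at hβ hu hv hB ⊢
    refine ⟨by simp [vstar, hβ], ?_, ?_, by simp [vstar, hB]⟩
    · apply ext_inner_right ℂ
      intro z
      simp only [vstar]
      rw [hPsa, InnerProductSpace.toDual_symm_apply, InnerProductSpace.toDual_symm_apply]
      exact DFunLike.congr_fun hv z
    · refine ContinuousLinearMap.ext fun z => ?_
      simp only [vstar, ContinuousLinearMap.comp_apply, InnerProductSpace.toDual_apply_apply]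
      rw [← hPsa, hu]
  · -- vstar c ∈ 𝔠
    rintro ⟨γ, w, t, C⟩ ⟨hγ, hw, ht⟩
    simp only [Set.mem_setOf_eq] at hγ hw ht ⊢
    refine ⟨by simp [vstar, hγ], ?_, ?_⟩
    · apply ext_inner_right ℂ
      intro z
      simp only [vstar]
      rw [hQsa, InnerProductSpace.toDual_symm_apply, InnerProductSpace.toDual_symm_apply]
      exact DFunLike.congr_fun ht z
    · refine ContinuousLinearMap.ext fun z => ?_
      simp only [vstar, ContinuousLinearMap.comp_apply, InnerProductSpace.toDual_apply_apply]
      rw [← hQsa, hw]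
  · -- add closure 𝔟
    rintro ⟨β, u, v, B⟩ ⟨β', u', v', B'⟩ ⟨h1, h2, h3, h4⟩ ⟨h1', h2', h3', h4'⟩
    simp only [Set.mem_setOf_eq] at *
    exact ⟨by rw [Prod.fst_add, h1, h1', add_zero],
      by simp only [Prod.snd_add, Prod.fst_add, map_add, h2, h2'],
      by simp only [Prod.snd_add, Prod.fst_add, ContinuousLinearMap.add_comp, h3, h3'],
      by simp only [Prod.snd_add, h4, h4', add_zero]⟩
  · -- smul closure 𝔟
    rintro γ ⟨β, u, v, B⟩ ⟨h1, h2, h3, h4⟩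
    simp only [Set.mem_setOf_eq] at *
    exact ⟨by simp [h1], by simp [map_smul, h2], by simp [ContinuousLinearMap.smul_comp, h3],
      by simp [h4]⟩
  · -- add closure 𝔠
    rintro ⟨β, u, v, B⟩ ⟨β', u', v', B'⟩ ⟨h1, h2, h3⟩ ⟨h1', h2', h3'⟩
    simp only [Set.mem_setOf_eq] at *
    exact ⟨by rw [Prod.fst_add, h1, h1', add_zero],
      by simp only [Prod.snd_add, Prod.fst_add, map_add, h2, h2'],
      by simp only [Prod.snd_add, Prod.fst_add, ContinuousLinearMap.add_comp, h3, h3']⟩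
  · -- smul closure 𝔠
    rintro γ ⟨β, u, v, B⟩ ⟨h1, h2, h3⟩
    simp only [Set.mem_setOf_eq] at *
    exact ⟨by simp [h1], by simp [map_smul, h2], by simp [ContinuousLinearMap.smul_comp, h3]⟩
  · -- product closure 𝔠 modulo θ
    rintro ⟨γ, w, t, C⟩ ⟨γ', w', t', C'⟩ ⟨h1, h2, h3⟩ ⟨h1', h2', h3'⟩
    simp only [Set.mem_setOf_eq] at *
    refine ⟨?_, ?_, ?_⟩
    · simp [vprod, vl, vtheta]
    · simp only [vprod, vl, vtheta, Prod.smul_mk, Prod.snd_sub, Prod.fst_sub, smul_zero,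
        sub_zero]
      exact hQA C w'
    · refine ContinuousLinearMap.ext fun z => ?_
      simp only [vprod, vl, vtheta, Prod.smul_mk, Prod.snd_sub, Prod.fst_sub, smul_zero,
        sub_zero, ContinuousLinearMap.comp_apply, ContinuousLinearMap.sub_apply,
        ContinuousLinearMap.smul_apply, ContinuousLinearMap.zero_apply]
      rw [hAQ]
  · -- mutual annihilation
    rintro ⟨β, u, v, B⟩ ⟨h1, h2, h3, h4⟩ ⟨γ, w, t, C⟩ ⟨hg1, hg2, hg3⟩
    simp only [Set.mem_setOf_eq] at *
    constructor
    · refine Prod.ext ?_ (Prod.ext ?_ (Prod.ext ?_ ?_)) <;>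
        simp only [vprod, h4, ZeroMemClass.coe_zero, ContinuousLinearMap.zero_apply,
          zero_mul, Prod.fst_zero, Prod.snd_zero]
      · rw [← hg2, ← h3]
        simp only [ContinuousLinearMap.comp_apply, hPQ, map_zero]
      · refine ContinuousLinearMap.ext fun z => ?_
        rw [← h3]
        simp only [ContinuousLinearMap.comp_apply, hPA, map_zero,
          ContinuousLinearMap.zero_apply]
    · refine Prod.ext ?_ (Prod.ext ?_ (Prod.ext ?_ ?_)) <;>
        simp only [vprod, h4, ZeroMemClass.coe_zero, mul_zero, Prod.fst_zero, Prod.snd_zero]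
      · rw [← hg3, ← h2]
        simp only [ContinuousLinearMap.comp_apply, hQP, map_zero]
      · rw [← h2]
        exact hAP C u
      · exact ContinuousLinearMap.ext fun z => by
          simp [ContinuousLinearMap.comp_apply]
  · -- (iii)
    rintro ⟨β, u, v, B⟩ ⟨β', u', v', B'⟩ ⟨h1, h2, h3, h4⟩ ⟨h1', h2', h3', h4'⟩
    simp only [Set.mem_setOf_eq] at *
    refine ⟨v u', ?_⟩
    refine Prod.ext ?_ (Prod.ext ?_ (Prod.ext ?_ ?_)) <;>
      simp only [vprod, vtheta, Prod.smul_mk, h4, h4', ZeroMemClass.coe_zero,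
        ContinuousLinearMap.zero_apply, zero_mul, smul_zero, smul_eq_mul, mul_one]
    · exact ContinuousLinearMap.ext fun z => by simp

end
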